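/- Let S be a commutative semiring, H a Hopf S-semialgebra with antipode 𝔞, and M an S-semimodule equipped with a right H-module structure and an S-linear coaction ρ : M → M ⊗_S H which is coassociative, counital, and satisfies the Hopf-semimodule compatibility ρ(m·h) = Σ m_{<0>}·h_1 ⊗ m_{<1>}·h_2 for all m ∈ M, h ∈ H. Let M^{coH} := { m ∈ M | ρ(m) = m ⊗ 1_H } be the S-subsemimodule of coinvariants. Then the S-linear map ψ_M : M^{coH} ⊗_S H → M, m ⊗ h ↦ m·h, is bijective, with inverse given by m ↦ Σ (m_{<0>}·𝔞(m_{<1>})) ⊗ m_{<2>}. -/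

import Mathlib

/-!
STATEMENT 9: Let `S` be a commutative semiring, `H` a Hopf `S`-semialgebra
with antipode `𝔞`, and `M` a right-right Hopf `H`-semimodule (a right
`H`-module with a coassociative counital coaction `ρ : M → M ⊗[S] H`
satisfying `ρ (m·h) = Σ m₍₀₎·h₁ ⊗ m₍₁₎·h₂`).  Then the `S`-linear map
`ψ : M^{coH} ⊗[S] H → M`, `m ⊗ h ↦ m·h`, is bijective, with inverse
`m ↦ Σ (m₍₀₎·𝔞 m₍₁₎) ⊗ m₍₂₎`.
-/

open TensorProduct

variable (S : Type*) [CommSemiring S] (H : Type*) [Semiring H] [HopfAlgebra S H]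
variable (M : Type*) [AddCommMonoid M] [Module S M] [Module Hᵐᵒᵖ M]
  [IsScalarTower S Hᵐᵒᵖ M]

/-- The right `H`-action on `M`, as an `S`-linear map `M ⊗[S] H →ₗ[S] M`,
`m ⊗ h ↦ m · h`. -/
noncomputable def ractionMap : M ⊗[S] H →ₗ[S] M :=
  TensorProduct.lift <| LinearMap.mk₂ S (fun m h => MulOpposite.op h • m)
    (fun m m' h => smul_add _ _ _)
    (fun s m h => by
      show MulOpposite.op h • (s • m) = s • (MulOpposite.op h • m)
      rw [← algebraMap_smul Hᵐᵒᵖ s m, ← mul_smul,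
        ← Algebra.commutes s (MulOpposite.op h), mul_smul, algebraMap_smul])
    (fun m h h' => by
      show MulOpposite.op (h + h') • m = MulOpposite.op h • m + MulOpposite.op h' • m
      rw [MulOpposite.op_add, add_smul])
    (fun s m h => by
      show MulOpposite.op (s • h) • m = s • (MulOpposite.op h • m)
      rw [MulOpposite.op_smul, smul_assoc])

/-- The `S`-subsemimodule of coinvariants `M^{coH} = { m | ρ m = m ⊗ 1 }`. -/
noncomputable def coinvariants (ρ : M →ₗ[S] M ⊗[S] H) : Submodule S M where
  carrier := { m | ρ m = m ⊗ₜ[S] (1 : H) }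
  add_mem' := by
    intro a b ha hb
    simp only [Set.mem_setOf_eq] at *
    rw [map_add, ha, hb, add_tmul]
  zero_mem' := by simp only [Set.mem_setOf_eq, map_zero, zero_tmul]
  smul_mem' := by
    intro s a ha
    simp only [Set.mem_setOf_eq] at *
    rw [map_smul, ha, smul_tmul']

section Aux




open TensorProduct Coalgebra

variable {S : Type*} [CommSemiring S]
variable {C : Type*} [AddCommMonoid C] [Module S C] [Coalgebra S C]
variable {B : Type*} [Semiring B] [Algebra S B]

/-- Convolution product on `Hom(C, B)`. -/
noncomputable def conv (f g : C →ₗ[S] B) : C →ₗ[S] B :=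
  LinearMap.mul' S B ∘ₗ TensorProduct.map f g ∘ₗ Coalgebra.comul

lemma conv_apply (f g : C →ₗ[S] B) (h : C) :
    conv f g h = LinearMap.mul' S B (TensorProduct.map f g (comul h)) := rfl

/-- The convolution unit. -/
noncomputable def convUnit : C →ₗ[S] B := Algebra.linearMap S B ∘ₗ Coalgebra.counit

lemma conv_assoc (f g k : C →ₗ[S] B) : conv (conv f g) k = conv f (conv g k) := by
  ext h
  have E1 : TensorProduct.map (conv f g) k =
      TensorProduct.map (LinearMap.mul' S B ∘ₗ TensorProduct.map f g) k ∘ₗ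
        LinearMap.rTensor C (comul (R := S)) := by
    apply TensorProduct.ext'
    intro a b
    simp [conv]
  have E2 : LinearMap.mul' S B ∘ₗ
        TensorProduct.map (LinearMap.mul' S B ∘ₗ TensorProduct.map f g) k ∘ₗ
        (TensorProduct.assoc S C C C).symm.toLinearMap =
      LinearMap.mul' S B ∘ₗ TensorProduct.map f (LinearMap.mul' S B ∘ₗ TensorProduct.map g k) := by
    apply TensorProduct.ext'
    intro a t
    induction t using TensorProduct.induction_on with
    | zero => simp
    | tmul b c => simp [mul_assoc]
    | add x y hx hy => simp_all [tmul_add]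
  have E3 : (LinearMap.mul' S B ∘ₗ
        TensorProduct.map f (LinearMap.mul' S B ∘ₗ TensorProduct.map g k)) ∘ₗ
        LinearMap.lTensor C (comul (R := S)) =
      LinearMap.mul' S B ∘ₗ TensorProduct.map f (conv g k) := by
    apply TensorProduct.ext'
    intro a b
    simp [conv]
  calc conv (conv f g) k h
      = LinearMap.mul' S B (TensorProduct.map (conv f g) k (comul h)) := rfl
    _ = LinearMap.mul' S B (TensorProduct.map (LinearMap.mul' S B ∘ₗ TensorProduct.map f g) k
          ((TensorProduct.assoc S C C C).symm (LinearMap.lTensor C comul (comul h)))) := by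
        rw [LinearMap.congr_fun E1 (comul h)]
        simp only [LinearMap.comp_apply, ← Coalgebra.coassoc_symm_apply]
    _ = LinearMap.mul' S B (TensorProduct.map f (conv g k) (comul h)) := by
        have := LinearMap.congr_fun E2 ((LinearMap.lTensor C (comul (R := S))) (comul h))
        simp only [LinearMap.comp_apply, LinearEquiv.coe_coe] at this
        rw [this]
        have := LinearMap.congr_fun E3 (comul h)
        simpa using this
    _ = conv f (conv g k) h := rfl

lemma conv_convUnit (f : C →ₗ[S] B) : conv f convUnit = f := by
  ext h
  have E : LinearMap.mul' S B ∘ₗ TensorProduct.map f (convUnit (S := S) (C := C) (B := B)) =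
      (TensorProduct.rid S B).toLinearMap ∘ₗ LinearMap.rTensor S f ∘ₗ
        LinearMap.lTensor C (counit (R := S)) := by
    apply TensorProduct.ext'
    intro a b
    simp [convUnit, Algebra.smul_def, ← Algebra.commutes]
  calc conv f convUnit h
      = (LinearMap.mul' S B ∘ₗ TensorProduct.map f convUnit) (comul h) := rfl
    _ = (TensorProduct.rid S B) (LinearMap.rTensor S f
          (LinearMap.lTensor C (counit (R := S)) (comul h))) := by rw [E]; rfl
    _ = f h := by rw [Coalgebra.lTensor_counit_comul]; simp

lemma convUnit_conv (f : C →ₗ[S] B) : conv convUnit f = f := by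
  ext h
  have E : LinearMap.mul' S B ∘ₗ TensorProduct.map (convUnit (S := S) (C := C) (B := B)) f =
      (TensorProduct.lid S B).toLinearMap ∘ₗ LinearMap.lTensor S f ∘ₗ
        LinearMap.rTensor C (counit (R := S)) := by
    apply TensorProduct.ext'
    intro a b
    simp [convUnit, Algebra.smul_def]
  calc conv convUnit f h
      = (LinearMap.mul' S B ∘ₗ TensorProduct.map convUnit f) (comul h) := rfl
    _ = (TensorProduct.lid S B) (LinearMap.lTensor S f
          (LinearMap.rTensor C (counit (R := S)) (comul h))) := by rw [E]; rfl
    _ = f h := by rw [Coalgebra.rTensor_counit_comul]; simp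

lemma conv_unique (a b c : C →ₗ[S] B) (h1 : conv a b = convUnit) (h2 : conv b c = convUnit) :
    a = c := by
  have := conv_assoc a b c
  rw [h1, h2, conv_convUnit, convUnit_conv] at this
  exact this.symm

section Hopf
variable {H : Type*} [Semiring H] [HopfAlgebra S H]
open HopfAlgebra

lemma conv_antipode_id : conv (antipode (R := S) (A := H)) LinearMap.id = convUnit := by
  ext h
  have : TensorProduct.map (antipode (R := S) (A := H)) LinearMap.id =
      LinearMap.rTensor H (antipode (R := S) (A := H)) := rfl
  simp [conv_apply, this, convUnit]

lemma conv_id_antipode : conv LinearMap.id (antipode (R := S) (A := H)) = convUnit := by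
  ext h
  have : TensorProduct.map LinearMap.id (antipode (R := S) (A := H)) =
      LinearMap.lTensor H (antipode (R := S) (A := H)) := rfl
  simp [conv_apply, this, convUnit]

lemma conv_comul_comul_antipode :
    conv (comul (R := S) (A := H))
      ((comul (R := S) (A := H)) ∘ₗ antipode (R := S) (A := H)) = convUnit := by
  ext h
  have E : LinearMap.mul' S (H ⊗[S] H) ∘ₗ
      TensorProduct.map (comul (R := S) (A := H)) (comul ∘ₗ antipode (R := S) (A := H)) =
      comul ∘ₗ LinearMap.mul' S H ∘ₗ LinearMap.lTensor H (antipode (R := S) (A := H)) := by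
    apply TensorProduct.ext'
    intro a b
    simp [Bialgebra.comul_mul]
  calc conv comul (comul ∘ₗ antipode (R := S) (A := H)) h
      = (LinearMap.mul' S (H ⊗[S] H) ∘ₗ
          TensorProduct.map comul (comul ∘ₗ antipode (R := S) (A := H))) (comul h) := rfl
    _ = comul (LinearMap.mul' S H (LinearMap.lTensor H (antipode (R := S) (A := H)) (comul h))) := by
        rw [E]; rfl
    _ = convUnit h := by
        rw [mul_antipode_lTensor_comul_apply]
        simp [convUnit]

end Hopf

section Hopf2
variable {H : Type*} [Semiring H] [HopfAlgebra S H]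
open HopfAlgebra

noncomputable def antiG (S H : Type*) [CommSemiring S] [Semiring H] [HopfAlgebra S H] :
    H →ₗ[S] H ⊗[S] H :=
  (TensorProduct.comm S H H).toLinearMap ∘ₗ
    TensorProduct.map (antipode (R := S)) (antipode (R := S)) ∘ₗ comul

lemma conv_antiG_comul : conv (antiG S H) (comul (R := S)) = convUnit := by
  set a' : H →ₗ[S] H := antipode (R := S)
  set m₂ : H ⊗[S] H →ₗ[S] H := LinearMap.mul' S H ∘ₗ LinearMap.rTensor H a' with hm₂
  set V : (H ⊗[S] H) ⊗[S] H →ₗ[S] H ⊗[S] H :=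
    LinearMap.mul' S (H ⊗[S] H) ∘ₗ
      TensorProduct.map ((TensorProduct.comm S H H).toLinearMap ∘ₗ TensorProduct.map a' a')
        comul with hV
  set Y₁ : H ⊗[S] (H ⊗[S] (H ⊗[S] H)) →ₗ[S] H ⊗[S] H :=
    TensorProduct.map m₂ m₂ ∘ₗ
      (TensorProduct.tensorTensorTensorComm S H H H H).toLinearMap ∘ₗ
      LinearMap.rTensor (H ⊗[S] H) (TensorProduct.comm S H H).toLinearMap ∘ₗ
      (TensorProduct.assoc S H H (H ⊗[S] H)).symm.toLinearMap with hY₁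
  set Y₂ : H ⊗[S] ((H ⊗[S] H) ⊗[S] H) →ₗ[S] H ⊗[S] H :=
    Y₁ ∘ₗ LinearMap.lTensor H (TensorProduct.assoc S H H H).toLinearMap with hY₂
  set π' : H ⊗[S] (H ⊗[S] H) →ₗ[S] H ⊗[S] (H ⊗[S] H) :=
    (TensorProduct.assoc S H H H).toLinearMap ∘ₗ
      LinearMap.rTensor H (TensorProduct.comm S H H).toLinearMap ∘ₗ
      (TensorProduct.assoc S H H H).symm.toLinearMap with hπ'
  set Y₃ : H ⊗[S] (H ⊗[S] H) →ₗ[S] H ⊗[S] H :=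
    TensorProduct.map (Algebra.linearMap S H ∘ₗ counit) m₂ ∘ₗ π' with hY₃
  ext h
  -- step 1
  have E1 : LinearMap.mul' S (H ⊗[S] H) ∘ₗ TensorProduct.map (antiG S H) (comul (R := S)) =
      V ∘ₗ LinearMap.rTensor H (comul (R := S)) := by
    apply TensorProduct.ext'
    intro x y
    simp [antiG, hV]
    rfl
  -- step 2
  have E2 : V ∘ₗ (TensorProduct.assoc S H H H).symm.toLinearMap =
      Y₁ ∘ₗ LinearMap.lTensor H (LinearMap.lTensor H (comul (R := S))) := by
    apply TensorProduct.ext'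
    intro x t
    induction t using TensorProduct.induction_on with
    | zero => simp
    | tmul c₁ c₂ =>
      have sub : ∀ w : H ⊗[S] H,
          LinearMap.mul' S (H ⊗[S] H) ((a' c₁ ⊗ₜ[S] a' x) ⊗ₜ[S] w) =
            Y₁ (x ⊗ₜ[S] (c₁ ⊗ₜ[S] w)) := by
        intro w
        induction w using TensorProduct.induction_on with
        | zero => simp
        | tmul p q =>
          simp [hY₁, hm₂, Algebra.TensorProduct.tmul_mul_tmul]
        | add u v hu hv => simp_all [tmul_add]
      simp only [LinearMap.comp_apply, LinearEquiv.coe_coe, TensorProduct.assoc_symm_tmul,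
        TensorProduct.map_tmul, LinearMap.lTensor_tmul, hV]
      simpa using sub (comul c₂)
    | add u v hu hv => simp_all [tmul_add]
  -- step 3
  have E3 : Y₂ ∘ₗ LinearMap.lTensor H (LinearMap.rTensor H (comul (R := S))) = Y₃ := by
    apply TensorProduct.ext'
    intro x t
    induction t using TensorProduct.induction_on with
    | zero => simp
    | tmul u z =>
      have sub : ∀ w : H ⊗[S] H,
          Y₂ (x ⊗ₜ[S] (w ⊗ₜ[S] z)) = (LinearMap.mul' S H (LinearMap.rTensor H a' w)) ⊗ₜ[S]
            (a' x * z) := by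
        intro w
        induction w using TensorProduct.induction_on with
        | zero => simp
        | tmul p q => simp [hY₂, hY₁, hm₂]
        | add u' v' hu hv => simp_all [add_tmul, tmul_add]
      simp only [LinearMap.comp_apply, LinearMap.lTensor_tmul, LinearMap.rTensor_tmul]
      rw [sub (comul u)]
      simp only [hY₃, hπ', hm₂, LinearMap.comp_apply, LinearEquiv.coe_coe,
        TensorProduct.assoc_symm_tmul, LinearMap.rTensor_tmul, TensorProduct.comm_tmul,
        TensorProduct.assoc_tmul, TensorProduct.map_tmul, Algebra.linearMap_apply]
      rw [show a' = antipode (R := S) (A := H) from rfl, mul_antipode_rTensor_comul_apply]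
      rfl
    | add u v hu hv => simp_all [tmul_add]
  -- step 4
  have E4 : Y₃ ∘ₗ LinearMap.lTensor H (comul (R := S)) =
      (TensorProduct.mk S H H 1) ∘ₗ m₂ := by
    apply TensorProduct.ext'
    intro x c
    have sub : ∀ t : H ⊗[S] H,
        Y₃ (x ⊗ₜ[S] t) = (1 : H) ⊗ₜ[S]
          (a' x * (TensorProduct.lid S H (LinearMap.rTensor H (counit (R := S)) t))) := by
      intro t
      induction t using TensorProduct.induction_on with
      | zero => simp
      | tmul u z =>
        simp only [hY₃, hπ', LinearMap.comp_apply, LinearEquiv.coe_coe,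
          TensorProduct.assoc_symm_tmul, LinearMap.rTensor_tmul, TensorProduct.comm_tmul,
          TensorProduct.assoc_tmul, TensorProduct.map_tmul, Algebra.linearMap_apply,
          TensorProduct.lid_tmul, hm₂, LinearMap.mul'_apply]
        rw [Algebra.algebraMap_eq_smul_one, smul_tmul, mul_smul_comm]
      | add u v hu hv => simp_all [tmul_add, map_add, mul_add]
    simp only [LinearMap.comp_apply, LinearMap.lTensor_tmul, sub (comul c),
      Coalgebra.rTensor_counit_comul, TensorProduct.mk_apply, hm₂]
    simp
  -- assemble
  calc conv (antiG S H) (comul (R := S)) h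
      = (LinearMap.mul' S (H ⊗[S] H) ∘ₗ TensorProduct.map (antiG S H) comul) (comul h) := rfl
    _ = V ((TensorProduct.assoc S H H H).symm
          (LinearMap.lTensor H comul (comul h))) := by
        rw [E1]
        simp only [LinearMap.comp_apply, ← Coalgebra.coassoc_symm_apply]
    _ = Y₁ (LinearMap.lTensor H (LinearMap.lTensor H (comul (R := S)))
          (LinearMap.lTensor H comul (comul h))) := by
        have := LinearMap.congr_fun E2 (LinearMap.lTensor H (comul (R := S)) (comul h))
        simpa using this
    _ = Y₂ (LinearMap.lTensor H (LinearMap.rTensor H (comul (R := S)))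
          (LinearMap.lTensor H comul (comul h))) := by
        have eq : LinearMap.lTensor H (LinearMap.lTensor H (comul (R := S))) ∘ₗ
            LinearMap.lTensor H (comul (R := S)) =
            LinearMap.lTensor H (TensorProduct.assoc S H H H).toLinearMap ∘ₗ
            LinearMap.lTensor H (LinearMap.rTensor H (comul (R := S))) ∘ₗ
            LinearMap.lTensor H (comul (R := S)) := by
          rw [← LinearMap.lTensor_comp, ← LinearMap.lTensor_comp, ← LinearMap.lTensor_comp,
            Coalgebra.coassoc]
        have heq := LinearMap.congr_fun eq (comul h)
        simp only [LinearMap.comp_apply] at heq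
        rw [heq]
        simp only [hY₂, LinearMap.comp_apply]
    _ = Y₃ (LinearMap.lTensor H comul (comul h)) := LinearMap.congr_fun E3 _
    _ = (TensorProduct.mk S H H 1) (m₂ (comul h)) := LinearMap.congr_fun E4 _
    _ = convUnit h := by
        simp only [TensorProduct.mk_apply, hm₂, LinearMap.comp_apply]
        rw [show a' = antipode (R := S) (A := H) from rfl, mul_antipode_rTensor_comul_apply]
        simp only [convUnit, LinearMap.comp_apply, Algebra.linearMap_apply,
          Algebra.TensorProduct.algebraMap_apply]
        rw [Algebra.algebraMap_eq_smul_one]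
        exact (TensorProduct.smul_tmul _ _ _).symm

end Hopf2

lemma comul_antipode' {H : Type*} [Semiring H] [HopfAlgebra S H] :
    (comul (R := S) (A := H)) ∘ₗ HopfAlgebra.antipode (R := S) = antiG S H :=
  (conv_unique (antiG S H) comul (comul ∘ₗ HopfAlgebra.antipode (R := S))
    conv_antiG_comul conv_comul_comul_antipode).symm

section HopfModule
open HopfAlgebra Coalgebra

variable (S : Type*) [CommSemiring S] (H : Type*) [Semiring H] [HopfAlgebra S H]
variable (M : Type*) [AddCommMonoid M] [Module S M] [Module Hᵐᵒᵖ M]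
  [IsScalarTower S Hᵐᵒᵖ M]

lemma raction_tmul (m : M) (h : H) :
    ractionMap S H M (m ⊗ₜ[S] h) = MulOpposite.op h • m := rfl

lemma op_smul_op_smul' (m : M) (a b : H) :
    MulOpposite.op b • MulOpposite.op a • m = MulOpposite.op (a * b) • m := by
  rw [MulOpposite.op_mul, mul_smul]

lemma op_algebraMap_smul (s : S) (m : M) :
    MulOpposite.op (algebraMap S H s) • m = s • m := by
  rw [← MulOpposite.algebraMap_apply, algebraMap_smul]

variable {S H M}

/-- Lemma A : `Σ (m₀ · 𝔞 m₁) · m₂ = m`. -/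
lemma lemA (ρ : M →ₗ[S] M ⊗[S] H)
    (hcoassoc : ∀ m : M, (TensorProduct.assoc S M H H)
        (LinearMap.rTensor H ρ (ρ m)) =
      LinearMap.lTensor M (Coalgebra.comul (R := S)) (ρ m))
    (hcounit : ∀ m : M, (TensorProduct.rid S M)
        (LinearMap.lTensor M (Coalgebra.counit (R := S)) (ρ m)) = m)
    (m : M) :
    ractionMap S H M (LinearMap.rTensor H
      (ractionMap S H M ∘ₗ LinearMap.lTensor M (antipode (R := S)) ∘ₗ ρ) (ρ m)) = m := by
  have hco : LinearMap.rTensor H ρ (ρ m) =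
      (TensorProduct.assoc S M H H).symm (LinearMap.lTensor M (comul (R := S)) (ρ m)) := by
    rw [LinearEquiv.eq_symm_apply]
    exact hcoassoc m
  have step1 : LinearMap.rTensor H
      (ractionMap S H M ∘ₗ LinearMap.lTensor M (antipode (R := S)) ∘ₗ ρ) (ρ m) =
      LinearMap.rTensor H (ractionMap S H M ∘ₗ LinearMap.lTensor M (antipode (R := S)))
        (LinearMap.rTensor H ρ (ρ m)) := by
    rw [show (ractionMap S H M ∘ₗ LinearMap.lTensor M (antipode (R := S)) ∘ₗ ρ) =
      (ractionMap S H M ∘ₗ LinearMap.lTensor M (antipode (R := S))) ∘ₗ ρ from rfl,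
      LinearMap.rTensor_comp, LinearMap.comp_apply]
  have EA : ractionMap S H M ∘ₗ
      LinearMap.rTensor H (ractionMap S H M ∘ₗ LinearMap.lTensor M (antipode (R := S))) ∘ₗ
      (TensorProduct.assoc S M H H).symm.toLinearMap =
      ractionMap S H M ∘ₗ
        LinearMap.lTensor M (LinearMap.mul' S H ∘ₗ LinearMap.rTensor H (antipode (R := S))) := by
    apply TensorProduct.ext'
    intro x t
    induction t using TensorProduct.induction_on with
    | zero => simp
    | tmul a b =>
      simp only [LinearMap.comp_apply, LinearEquiv.coe_coe, TensorProduct.assoc_symm_tmul,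
        LinearMap.rTensor_tmul, LinearMap.lTensor_tmul, LinearMap.mul'_apply, raction_tmul]
      rw [op_smul_op_smul']
    | add u v hu hv => simp_all [tmul_add]
  have EB : ractionMap S H M ∘ₗ LinearMap.lTensor M (Algebra.linearMap S H ∘ₗ counit) =
      (TensorProduct.rid S M).toLinearMap ∘ₗ LinearMap.lTensor M (counit (R := S) (A := H)) := by
    apply TensorProduct.ext'
    intro x h
    simp only [LinearMap.comp_apply, LinearMap.lTensor_tmul, Algebra.linearMap_apply,
      raction_tmul, LinearEquiv.coe_coe, TensorProduct.rid_tmul]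
    rw [op_algebraMap_smul]
  rw [step1, hco]
  have h1 := LinearMap.congr_fun EA (LinearMap.lTensor M (comul (R := S)) (ρ m))
  simp only [LinearMap.comp_apply, LinearEquiv.coe_coe] at h1
  rw [h1, ← LinearMap.lTensor_comp_apply]
  rw [show (LinearMap.mul' S H ∘ₗ LinearMap.rTensor H (antipode (R := S))) ∘ₗ
      (comul (R := S) (A := H)) =
      LinearMap.mul' S H ∘ₗ LinearMap.rTensor H (antipode (R := S)) ∘ₗ comul from rfl,
    HopfAlgebra.mul_antipode_rTensor_comul]
  have h2 := LinearMap.congr_fun EB (ρ m)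
  simp only [LinearMap.comp_apply, LinearEquiv.coe_coe] at h2
  rw [h2]
  exact hcounit m

set_option maxHeartbeats 1000000 in
/-- Lemma B : `P m = Σ m₀ · 𝔞 m₁` is coinvariant. -/
lemma lemB (ρ : M →ₗ[S] M ⊗[S] H)
    (hcoassoc : ∀ m : M, (TensorProduct.assoc S M H H)
        (LinearMap.rTensor H ρ (ρ m)) =
      LinearMap.lTensor M (Coalgebra.comul (R := S)) (ρ m))
    (hcompat : ∀ (m : M) (h : H),
      ρ (MulOpposite.op h • m) =
        TensorProduct.map (ractionMap S H M) (LinearMap.mul' S H)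
          ((TensorProduct.tensorTensorTensorComm S M H H H)
            (ρ m ⊗ₜ[S] Coalgebra.comul h)))
    (m : M) :
    ρ (ractionMap S H M (LinearMap.lTensor M (antipode (R := S)) (ρ m))) =
      (ractionMap S H M (LinearMap.lTensor M (antipode (R := S)) (ρ m))) ⊗ₜ[S] (1 : H) := by
  set a' : H →ₗ[S] H := antipode (R := S) (A := H) with ha'
  set ψ₀ : M ⊗[S] H →ₗ[S] M := ractionMap S H M with hψ₀
  have hψt : ∀ (x : M) (h : H), ψ₀ (x ⊗ₜ[S] h) = MulOpposite.op h • x := fun _ _ => rfl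
  -- the compatibility, as a map identity
  have hcompatₗ : ρ ∘ₗ ψ₀ = TensorProduct.map ψ₀ (LinearMap.mul' S H) ∘ₗ
      (TensorProduct.tensorTensorTensorComm S M H H H).toLinearMap ∘ₗ
      TensorProduct.map ρ (comul (R := S)) := by
    apply TensorProduct.ext'
    intro x h
    simpa [hψt] using hcompat x h
  -- the canonical middle maps
  set K₂ : M ⊗[S] (H ⊗[S] (H ⊗[S] H)) →ₗ[S] M ⊗[S] H :=
    TensorProduct.map (ψ₀ ∘ₗ LinearMap.lTensor M a') (LinearMap.mul' S H ∘ₗ LinearMap.lTensor H a') ∘ₗ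
      (TensorProduct.tensorTensorTensorComm S M H H H).toLinearMap ∘ₗ
      (TensorProduct.assoc S M H (H ⊗[S] H)).symm.toLinearMap ∘ₗ
      LinearMap.lTensor M (LinearMap.lTensor H (TensorProduct.comm S H H).toLinearMap) with hK₂
  set K₃ : M ⊗[S] ((H ⊗[S] H) ⊗[S] H) →ₗ[S] M ⊗[S] H :=
    K₂ ∘ₗ LinearMap.lTensor M (TensorProduct.assoc S H H H).toLinearMap with hK₃
  set K₄ : M ⊗[S] (H ⊗[S] H) →ₗ[S] M ⊗[S] H :=
    LinearMap.rTensor H (ψ₀ ∘ₗ LinearMap.lTensor M a') ∘ₗ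
      (TensorProduct.assoc S M H H).symm.toLinearMap ∘ₗ
      LinearMap.lTensor M (TensorProduct.comm S H H).toLinearMap with hK₄
  -- step 1 : apply compatibility
  have s1 : ρ (ψ₀ (LinearMap.lTensor M a' (ρ m))) =
      TensorProduct.map ψ₀ (LinearMap.mul' S H)
        ((TensorProduct.tensorTensorTensorComm S M H H H)
          (TensorProduct.map ρ (comul (R := S)) (LinearMap.lTensor M a' (ρ m)))) := by
    have := LinearMap.congr_fun hcompatₗ (LinearMap.lTensor M a' (ρ m))
    simpa using this
  -- step 2 : push the antipode through comul (anti-comultiplicativity)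
  have e1 : TensorProduct.map ρ (comul (R := S)) ∘ₗ LinearMap.lTensor M a' =
      LinearMap.lTensor (M ⊗[S] H)
          ((TensorProduct.comm S H H).toLinearMap ∘ₗ TensorProduct.map a' a') ∘ₗ
        TensorProduct.map ρ (comul (R := S)) := by
    have hca := comul_antipode' (S := S) (H := H)
    apply TensorProduct.ext'
    intro x h
    have : comul (R := S) (a' h) = antiG S H h := LinearMap.congr_fun hca h
    simp only [LinearMap.comp_apply, LinearMap.lTensor_tmul, TensorProduct.map_tmul, this,
      antiG, LinearMap.id_apply]
    rfl
  -- step 3 : coassociativity of the coaction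
  have e3 : TensorProduct.map ρ (comul (R := S)) (ρ m) =
      LinearMap.lTensor (M ⊗[S] H) (comul (R := S))
        ((TensorProduct.assoc S M H H).symm (LinearMap.lTensor M (comul (R := S)) (ρ m))) := by
    have e3' : TensorProduct.map ρ (comul (R := S) (A := H)) =
        LinearMap.lTensor (M ⊗[S] H) (comul (R := S)) ∘ₗ LinearMap.rTensor H ρ := by
      apply TensorProduct.ext'
      intro x h
      simp
    rw [e3', LinearMap.comp_apply]
    congr 1
    rw [LinearEquiv.eq_symm_apply]
    exact hcoassoc m
  rw [s1]
  have s2 := LinearMap.congr_fun e1 (ρ m)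
  simp only [LinearMap.comp_apply] at s2
  rw [s2, e3]
  -- now everything is expressed through `t := lTensor M comul (ρ m)`
  -- step 4 : identify with K₂ after a further comul expansion
  have E2 : TensorProduct.map ψ₀ (LinearMap.mul' S H) ∘ₗ
      (TensorProduct.tensorTensorTensorComm S M H H H).toLinearMap ∘ₗ
      LinearMap.lTensor (M ⊗[S] H)
        ((TensorProduct.comm S H H).toLinearMap ∘ₗ TensorProduct.map a' a') ∘ₗ
      LinearMap.lTensor (M ⊗[S] H) (comul (R := S)) ∘ₗ
      (TensorProduct.assoc S M H H).symm.toLinearMap =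
      K₂ ∘ₗ LinearMap.lTensor M (LinearMap.lTensor H (comul (R := S))) := by
    apply TensorProduct.ext'
    intro x t
    induction t using TensorProduct.induction_on with
    | zero => simp
    | tmul a b =>
      have sub : ∀ w : H ⊗[S] H,
          TensorProduct.map ψ₀ (LinearMap.mul' S H)
            ((TensorProduct.tensorTensorTensorComm S M H H H)
              ((x ⊗ₜ[S] a) ⊗ₜ[S]
                ((TensorProduct.comm S H H) (TensorProduct.map a' a' w)))) =
            K₂ (x ⊗ₜ[S] (a ⊗ₜ[S] w)) := by
        intro w
        induction w using TensorProduct.induction_on with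
        | zero => simp
        | tmul p q =>
          simp [hK₂, hψt, TensorProduct.tensorTensorTensorComm_tmul]
        | add u v hu hv => simp_all [tmul_add]
      simp only [LinearMap.comp_apply, LinearEquiv.coe_coe, TensorProduct.assoc_symm_tmul,
        LinearMap.lTensor_tmul]
      exact sub (comul b)
    | add u v hu hv => simp_all [tmul_add]
  have s4 := LinearMap.congr_fun E2 (LinearMap.lTensor M (comul (R := S)) (ρ m))
  simp only [LinearMap.comp_apply, LinearEquiv.coe_coe] at s4
  rw [s4]
  -- step 5 : coassociativity of comul inside the left factor
  have s5m : LinearMap.lTensor M (LinearMap.lTensor H (comul (R := S))) ∘ₗ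
      LinearMap.lTensor M (comul (R := S)) =
      (LinearMap.lTensor M (TensorProduct.assoc S H H H).toLinearMap ∘ₗ
        LinearMap.lTensor M (LinearMap.rTensor H (comul (R := S)))) ∘ₗ
      LinearMap.lTensor M (comul (R := S)) := by
    rw [← LinearMap.lTensor_comp, ← LinearMap.lTensor_comp, ← LinearMap.lTensor_comp,
      LinearMap.comp_assoc, Coalgebra.coassoc]
  have s5 := LinearMap.congr_fun s5m (ρ m)
  simp only [LinearMap.comp_apply] at s5
  rw [s5]
  -- step 6 : contract the middle pair with the antipode axiom
  have E3 : K₄ ∘ₗ LinearMap.lTensor M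
        (LinearMap.rTensor H (LinearMap.mul' S H ∘ₗ LinearMap.lTensor H a')) =
      K₃ := by
    apply TensorProduct.ext'
    intro x t
    induction t using TensorProduct.induction_on with
    | zero => simp
    | tmul w z =>
      induction w using TensorProduct.induction_on with
      | zero => simp [TensorProduct.zero_tmul]
      | tmul p q =>
        simp [hK₃, hK₂, hK₄, hψt, TensorProduct.tensorTensorTensorComm_tmul]
      | add u v hu hv => simp_all [tmul_add, add_tmul]
    | add u v hu hv => simp_all [tmul_add]
  have s6 : K₃ (LinearMap.lTensor M (LinearMap.rTensor H (comul (R := S)))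
        (LinearMap.lTensor M (comul (R := S)) (ρ m))) =
      K₄ (LinearMap.lTensor M
        (LinearMap.rTensor H (Algebra.linearMap S H ∘ₗ counit))
        (LinearMap.lTensor M (comul (R := S)) (ρ m))) := by
    rw [← E3]
    simp only [LinearMap.comp_apply]
    congr 1
    rw [← LinearMap.lTensor_comp_apply, ← LinearMap.lTensor_comp_apply,
      ← LinearMap.rTensor_comp, show (LinearMap.mul' S H ∘ₗ LinearMap.lTensor H a') ∘ₗ
        (comul (R := S) (A := H)) =
        LinearMap.mul' S H ∘ₗ LinearMap.lTensor H a' ∘ₗ comul from rfl, ha',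
      HopfAlgebra.mul_antipode_lTensor_comul]
    rw [LinearMap.lTensor_comp]
    rfl
  have fold : ∀ x, K₂ (LinearMap.lTensor M (TensorProduct.assoc S H H H).toLinearMap x) =
      K₃ x := fun _ => rfl
  rw [fold, s6]
  -- step 7 : counit law
  have c1 : LinearMap.rTensor H (Algebra.linearMap S H ∘ₗ counit) ∘ₗ
      (comul (R := S) (A := H)) = (TensorProduct.mk S H H) 1 := by
    apply LinearMap.ext
    intro h
    simp only [LinearMap.comp_apply, LinearMap.rTensor_comp_apply,
      Coalgebra.rTensor_counit_comul, LinearMap.rTensor_tmul, Algebra.linearMap_apply,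
      map_one, TensorProduct.mk_apply]
  have s7 : LinearMap.lTensor M (LinearMap.rTensor H (Algebra.linearMap S H ∘ₗ counit))
        (LinearMap.lTensor M (comul (R := S)) (ρ m)) =
      LinearMap.lTensor M ((TensorProduct.mk S H H) 1) (ρ m) := by
    rw [← LinearMap.lTensor_comp_apply, c1]
  rw [s7]
  -- step 8 : conclude
  have E4 : K₄ ∘ₗ LinearMap.lTensor M ((TensorProduct.mk S H H) 1) =
      (TensorProduct.mk S M H).flip 1 ∘ₗ ψ₀ ∘ₗ LinearMap.lTensor M a' := by
    apply TensorProduct.ext'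
    intro x h
    simp [hK₄, hψt]
  have := LinearMap.congr_fun E4 (ρ m)
  simp only [LinearMap.comp_apply, LinearMap.flip_apply, TensorProduct.mk_apply] at this
  rw [this]

/-- Lemma C, step (i): the coaction on `m · h` for coinvariant `m`. -/
lemma lemC1 (ρ : M →ₗ[S] M ⊗[S] H)
    (hcompat : ∀ (m : M) (h : H),
      ρ (MulOpposite.op h • m) =
        TensorProduct.map (ractionMap S H M) (LinearMap.mul' S H)
          ((TensorProduct.tensorTensorTensorComm S M H H H)
            (ρ m ⊗ₜ[S] Coalgebra.comul h)))
    (m : M) (hm : ρ m = m ⊗ₜ[S] (1 : H)) (h : H) :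
    ρ (MulOpposite.op h • m) =
      LinearMap.rTensor H (ractionMap S H M ∘ₗ (TensorProduct.mk S M H) m)
        (comul (R := S) h) := by
  rw [hcompat m h, hm]
  have Ei : TensorProduct.map (ractionMap S H M) (LinearMap.mul' S H) ∘ₗ
      (TensorProduct.tensorTensorTensorComm S M H H H).toLinearMap ∘ₗ
      (TensorProduct.mk S (M ⊗[S] H) (H ⊗[S] H)) (m ⊗ₜ[S] (1 : H)) =
      LinearMap.rTensor H (ractionMap S H M ∘ₗ (TensorProduct.mk S M H) m) := by
    apply TensorProduct.ext'
    intro a b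
    simp [TensorProduct.tensorTensorTensorComm_tmul]
  exact LinearMap.congr_fun Ei (comul h)

/-- Lemma C, step (ii): for coinvariant `m`, `Σ (m·h)₀ · 𝔞 (m·h)₁ = ε h • m`. -/
lemma lemC2 (ρ : M →ₗ[S] M ⊗[S] H)
    (hcompat : ∀ (m : M) (h : H),
      ρ (MulOpposite.op h • m) =
        TensorProduct.map (ractionMap S H M) (LinearMap.mul' S H)
          ((TensorProduct.tensorTensorTensorComm S M H H H)
            (ρ m ⊗ₜ[S] Coalgebra.comul h)))
    (m : M) (hm : ρ m = m ⊗ₜ[S] (1 : H)) (a : H) :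
    ractionMap S H M (LinearMap.lTensor M (antipode (R := S))
        (ρ (MulOpposite.op a • m))) = counit (R := S) a • m := by
  rw [lemC1 ρ hcompat m hm a]
  have Eiii : ractionMap S H M ∘ₗ LinearMap.lTensor M (antipode (R := S) (A := H)) ∘ₗ
      LinearMap.rTensor H (ractionMap S H M ∘ₗ (TensorProduct.mk S M H) m) =
      (ractionMap S H M ∘ₗ (TensorProduct.mk S M H) m) ∘ₗ
        LinearMap.mul' S H ∘ₗ LinearMap.lTensor H (antipode (R := S)) := by
    apply TensorProduct.ext'
    intro x y
    simp only [LinearMap.comp_apply, LinearMap.rTensor_tmul, LinearMap.lTensor_tmul,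
      TensorProduct.mk_apply, raction_tmul, LinearMap.mul'_apply]
    rw [op_smul_op_smul']
  have h1 := LinearMap.congr_fun Eiii (comul a)
  simp only [LinearMap.comp_apply] at h1 ⊢
  rw [h1, HopfAlgebra.mul_antipode_lTensor_comul_apply, TensorProduct.mk_apply,
    raction_tmul, op_algebraMap_smul]

end HopfModule

theorem coinvariants_tensor_bijective'
    (S : Type*) [CommSemiring S] (H : Type*) [Semiring H] [HopfAlgebra S H]
    (M : Type*) [AddCommMonoid M] [Module S M] [Module Hᵐᵒᵖ M] [IsScalarTower S Hᵐᵒᵖ M]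
    (ρ : M →ₗ[S] M ⊗[S] H)
    (hcoassoc : ∀ m : M, (TensorProduct.assoc S M H H)
        (LinearMap.rTensor H ρ (ρ m)) =
      LinearMap.lTensor M (Coalgebra.comul (R := S)) (ρ m))
    (hcounit : ∀ m : M, (TensorProduct.rid S M)
        (LinearMap.lTensor M (Coalgebra.counit (R := S)) (ρ m)) = m)
    (hcompat : ∀ (m : M) (h : H),
      ρ (MulOpposite.op h • m) =
        TensorProduct.map (ractionMap S H M) (LinearMap.mul' S H)
          ((TensorProduct.tensorTensorTensorComm S M H H H)
            (ρ m ⊗ₜ[S] Coalgebra.comul h))) :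
    Function.Bijective
      (ractionMap S H M ∘ₗ
        TensorProduct.map (coinvariants S H M ρ).subtype LinearMap.id) ∧
    ∃ φ : M →ₗ[S] (coinvariants S H M ρ) ⊗[S] H,
      (∀ x, φ ((ractionMap S H M ∘ₗ
          TensorProduct.map (coinvariants S H M ρ).subtype LinearMap.id) x) = x) ∧
      (∀ m, (ractionMap S H M ∘ₗ
          TensorProduct.map (coinvariants S H M ρ).subtype LinearMap.id) (φ m) = m) ∧
      (∀ m, TensorProduct.map (coinvariants S H M ρ).subtype LinearMap.id (φ m) =
        (TensorProduct.map
            (ractionMap S H M ∘ₗ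
              LinearMap.lTensor M (HopfAlgebra.antipode (R := S) (A := H)))
            LinearMap.id ∘ₗ
          LinearMap.rTensor H ρ ∘ₗ ρ) m) := by
  open HopfAlgebra in
  set P : M →ₗ[S] M :=
    ractionMap S H M ∘ₗ LinearMap.lTensor M (antipode (R := S)) ∘ₗ ρ with hPdef
  have hPmem : ∀ m : M, P m ∈ coinvariants S H M ρ := by
    intro m
    show ρ (P m) = P m ⊗ₜ[S] (1 : H)
    simpa [hPdef] using lemB ρ hcoassoc hcompat m
  set P' : M →ₗ[S] (coinvariants S H M ρ) :=
    P.codRestrict (coinvariants S H M ρ) hPmem with hP'def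
  set φ : M →ₗ[S] (coinvariants S H M ρ) ⊗[S] H :=
    LinearMap.rTensor H P' ∘ₗ ρ with hφdef
  have hsub : ∀ x : M ⊗[S] H,
      TensorProduct.map (coinvariants S H M ρ).subtype LinearMap.id
        (LinearMap.rTensor H P' x) = LinearMap.rTensor H P x := by
    intro x
    induction x using TensorProduct.induction_on with
    | zero => simp
    | tmul a b => simp [hP'def]
    | add u v hu hv => simp_all
  -- right inverse
  have fact_r : ∀ m : M, (ractionMap S H M ∘ₗ
      TensorProduct.map (coinvariants S H M ρ).subtype LinearMap.id) (φ m) = m := by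
    intro m
    simp only [hφdef, LinearMap.comp_apply, hsub]
    exact lemA ρ hcoassoc hcounit m
  -- left inverse
  have fact_l : ∀ x : (coinvariants S H M ρ) ⊗[S] H,
      φ ((ractionMap S H M ∘ₗ
        TensorProduct.map (coinvariants S H M ρ).subtype LinearMap.id) x) = x := by
    have E : φ ∘ₗ (ractionMap S H M ∘ₗ
        TensorProduct.map (coinvariants S H M ρ).subtype LinearMap.id) = LinearMap.id := by
      apply TensorProduct.ext'
      intro c h
      have hm : ρ (c : M) = (c : M) ⊗ₜ[S] (1 : H) := c.2
      simp only [LinearMap.comp_apply, TensorProduct.map_tmul, Submodule.coe_subtype,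
        LinearMap.id_apply, raction_tmul, hφdef]
      rw [lemC1 ρ hcompat (c : M) hm h, ← LinearMap.rTensor_comp_apply]
      have hPg : P' ∘ₗ (ractionMap S H M ∘ₗ (TensorProduct.mk S M H) (c : M)) =
          LinearMap.toSpanSingleton S _ c ∘ₗ (counit (R := S) (A := H)) := by
        apply LinearMap.ext
        intro a
        apply Subtype.ext
        simp only [LinearMap.comp_apply]
        have : (P' ((ractionMap S H M) ((TensorProduct.mk S M H) (c : M) a)) : M) =
            P (MulOpposite.op a • (c : M)) := rfl
        rw [this]
        have hc2 := lemC2 ρ hcompat (c : M) hm a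
        simp only [hPdef, LinearMap.comp_apply] at hc2 ⊢
        rw [hc2]
        simp [LinearMap.toSpanSingleton_apply]
      rw [hPg, LinearMap.rTensor_comp_apply, Coalgebra.rTensor_counit_comul]
      simp [LinearMap.toSpanSingleton_apply]
    intro x
    exact LinearMap.congr_fun E x
  -- the explicit formula
  have fact_f : ∀ m : M, TensorProduct.map (coinvariants S H M ρ).subtype LinearMap.id (φ m) =
      (TensorProduct.map
          (ractionMap S H M ∘ₗ LinearMap.lTensor M (antipode (R := S) (A := H)))
          LinearMap.id ∘ₗ LinearMap.rTensor H ρ ∘ₗ ρ) m := by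
    intro m
    simp only [hφdef, LinearMap.comp_apply, hsub]
    have E : TensorProduct.map
        (ractionMap S H M ∘ₗ LinearMap.lTensor M (antipode (R := S) (A := H)))
        LinearMap.id ∘ₗ LinearMap.rTensor H ρ = LinearMap.rTensor H P := by
      apply TensorProduct.ext'
      intro x h
      simp [hPdef]
    have e2 := LinearMap.congr_fun E (ρ m)
    simp only [LinearMap.comp_apply] at e2
    exact e2.symm
  refine ⟨⟨?_, ?_⟩, φ, fact_l, fact_r, fact_f⟩
  · intro x y hxy
    have := congrArg φ hxy
    rwa [fact_l x, fact_l y] at this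
  · intro m
    exact ⟨φ m, fact_r m⟩



end Aux

theorem coinvariants_tensor_bijective
    (ρ : M →ₗ[S] M ⊗[S] H)
    -- coassociativity of the coaction
    (hcoassoc : ∀ m : M, (TensorProduct.assoc S M H H)
        (LinearMap.rTensor H ρ (ρ m)) =
      LinearMap.lTensor M (Coalgebra.comul (R := S)) (ρ m))
    -- counitality of the coaction
    (hcounit : ∀ m : M, (TensorProduct.rid S M)
        (LinearMap.lTensor M (Coalgebra.counit (R := S)) (ρ m)) = m)
    -- Hopf-semimodule compatibility: `ρ (m·h) = Σ m₍₀₎·h₁ ⊗ m₍₁₎·h₂`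
    (hcompat : ∀ (m : M) (h : H),
      ρ (MulOpposite.op h • m) =
        TensorProduct.map (ractionMap S H M) (LinearMap.mul' S H)
          ((TensorProduct.tensorTensorTensorComm S M H H H)
            (ρ m ⊗ₜ[S] Coalgebra.comul h))) :
    -- `ψ : M^{coH} ⊗[S] H → M`, `m ⊗ h ↦ m·h`, is bijective …
    Function.Bijective
      (ractionMap S H M ∘ₗ
        TensorProduct.map (coinvariants S H M ρ).subtype LinearMap.id) ∧
    -- … with inverse `m ↦ Σ (m₍₀₎·𝔞 m₍₁₎) ⊗ m₍₂₎`
    ∃ φ : M →ₗ[S] (coinvariants S H M ρ) ⊗[S] H,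
      (∀ x, φ ((ractionMap S H M ∘ₗ
          TensorProduct.map (coinvariants S H M ρ).subtype LinearMap.id) x) = x) ∧
      (∀ m, (ractionMap S H M ∘ₗ
          TensorProduct.map (coinvariants S H M ρ).subtype LinearMap.id) (φ m) = m) ∧
      (∀ m, TensorProduct.map (coinvariants S H M ρ).subtype LinearMap.id (φ m) =
        (TensorProduct.map
            (ractionMap S H M ∘ₗ
              LinearMap.lTensor M (HopfAlgebra.antipode (R := S) (A := H)))
            LinearMap.id ∘ₗ
          LinearMap.rTensor H ρ ∘ₗ ρ) m) := by
  exact coinvariants_tensor_bijective' S H M ρ hcoassoc hcounit hcompat
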